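/- A dually chordal graph G is 3-colourable if and only if G is perfect and K4-free. -/

import Mathlib

open SimpleGraph

/-- A graph is perfect if every induced subgraph has chromatic number
equal to its clique number. -/
def IsPerfect {V : Type*} (G : SimpleGraph V) : Prop :=
  ∀ s : Set V, (G.induce s).chromaticNumber = ((G.induce s).cliqueNum : ℕ∞)

namespace StmtAux

open SimpleGraph Walk

lemma concat_isPath {V : Type*} {G : SimpleGraph V} {u v w : V} {p : G.Walk u v} (h : G.Adj v w)
    (hp : p.IsPath) (hw : w ∉ p.support) : (p.concat h).IsPath := by
  rw [← isPath_reverse_iff, reverse_concat, cons_isPath_iff]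
  exact ⟨hp.reverse, by simpa using hw⟩

lemma cliqueNum_le_of_cliqueFree {W : Type*} [Fintype W] {G : SimpleGraph W} {n : ℕ}
    (h : G.CliqueFree (n + 1)) : G.cliqueNum ≤ n := by
  by_contra hh
  push_neg at hh
  obtain ⟨t, ht⟩ := G.exists_isNClique_cliqueNum
  obtain ⟨t', ht's, ht'c⟩ := t.exists_subset_card_eq (show n + 1 ≤ t.card by rw [ht.2]; exact hh)
  exact h t' ⟨ht.1.subset (Finset.coe_subset.2 ht's), ht'c⟩

/-- The key lemma: a triangle-free "induced subgraph" of a 3-colorable dually chordal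
graph is 2-colorable, via an explicit coloring built from the spanning tree. -/
lemma two_colorable {V : Type*} (G T : SimpleGraph V)
    (hsub : T ≤ G) (htree : T.IsTree) (hK4 : G.CliqueFree 4)
    (hdc : ∀ u v : V, G.Adj u v → ∀ p : T.Path u v, ∀ w ∈ p.1.support,
      w ≠ u → w ≠ v → G.Adj u w ∧ G.Adj v w)
    (χ : G.Coloring (Fin 3)) (s : Set V)
    (htf : ∀ a b c : V, a ∈ s → b ∈ s → c ∈ s →
      G.Adj a b → G.Adj a c → G.Adj b c → False) :
    (G.induce s).Colorable 2 := by
  classical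
  obtain ⟨r⟩ : Nonempty V := htree.isConnected.nonempty
  have hEU := htree.existsUnique_path
  set pw : ∀ v, T.Walk r v := fun v => (hEU r v).choose with hpwdef
  have hpw : ∀ v, (pw v).IsPath := fun v => (hEU r v).choose_spec.1
  have huniq : ∀ (v) (q : T.Walk r v), q.IsPath → q = pw v :=
    fun v q hq => (hEU r v).choose_spec.2 q hq
  have pw_r : pw r = Walk.nil := (huniq r Walk.nil IsPath.nil).symm
  set par : V → V := fun v => (pw v).reverse.getVert 1 with hpardef
  have par_r : par r = r := by
    simp [hpardef, pw_r, Walk.getVert]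
  have stp : ∀ v, v ≠ r → ∃ h : T.Adj (par v) v, pw v = (pw (par v)).concat h := by
    intro v hv
    have hnn : ¬ (pw v).reverse.Nil := not_nil_of_ne hv
    have hadj : T.Adj v (par v) := adj_snd hnn
    refine ⟨hadj.symm, ?_⟩
    have htl : ((pw v).reverse.tail).IsPath := ((hpw v).reverse).tail
    have h1 : Walk.cons (adj_snd hnn) (pw v).reverse.tail = (pw v).reverse :=
      cons_tail_eq _ hnn
    have h2 : ((pw v).reverse.tail).reverse = pw (par v) := huniq _ _ htl.reverse
    calc pw v = (pw v).reverse.reverse := (reverse_reverse _).symm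
    _ = (Walk.cons (adj_snd hnn) (pw v).reverse.tail).reverse := by rw [h1]
    _ = ((pw v).reverse.tail).reverse.concat hadj.symm := by
          rw [reverse_cons, concat_eq_append]
    _ = (pw (par v)).concat hadj.symm := by rw [h2]
  have cne : ∀ {v u : V} (h : T.Adj u v) (q : T.Walk r u), pw v = q.concat h → v ≠ r := by
    intro v u h q heq hvr
    subst hvr
    have := congrArg Walk.length heq
    rw [pw_r] at this
    simp [length_concat] at this
  have cdec : ∀ (u v : V) (h : T.Adj u v), pw v = (pw u).concat h → par v = u := by
    intro u v h heq
    have hrev : (pw v).reverse = Walk.cons h.symm (pw u).reverse := by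
      rw [heq, reverse_concat]
    show (pw v).reverse.getVert 1 = u
    rw [hrev]
    show ((pw u).reverse).getVert 0 = u
    exact getVert_zero _
  have adjstep : ∀ u v : V, T.Adj u v → par v = u ∨ par u = v := by
    intro u v h
    by_cases hv : v ∈ (pw u).support
    · right
      have hq : ((pw u).takeUntil v hv).IsPath := (hpw u).takeUntil hv
      have hd : ((pw u).dropUntil v hv).IsPath := (hpw u).dropUntil hv
      have he : (Walk.cons h.symm Walk.nil : T.Walk v u).IsPath := by
        simp [cons_isPath_iff, h.ne']
      have hde : (pw u).dropUntil v hv = Walk.cons h.symm Walk.nil :=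
        (htree.existsUnique_path v u).unique hd he
      have hqe : (pw u).takeUntil v hv = pw v := huniq v _ hq
      apply cdec v u h.symm
      rw [← take_spec (pw u) hv, hde, hqe, concat_eq_append]
    · left
      apply cdec u v h
      exact (huniq v _ (concat_isPath h (hpw u) hv)).symm
  have dist2 : ∀ u v : V, G.Adj u v → ¬ T.Adj u v →
      ∃ w, T.Adj u w ∧ T.Adj w v ∧ w ≠ u ∧ w ≠ v := by
    intro u v huv htuv
    obtain ⟨q, hq, -⟩ := htree.existsUnique_path u v
    cases q with
    | nil => exact absurd rfl huv.ne
    | cons h1 q1 =>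
      rename_i w1
      cases q1 with
      | nil => exact absurd h1 htuv
      | cons h2 q2 =>
        rename_i w2
        cases q2 with
        | nil =>
          have hnd := hq.2
          refine ⟨w1, h1, h2, ?_, ?_⟩ <;> intro e <;> subst e <;> simp at hnd
        | cons h3 q3 =>
          exfalso
          rename_i w3
          have hvq3 : v ∈ q3.support := end_mem_support q3
          have hnd := hq.2
          simp only [support_cons, List.nodup_cons] at hnd
          have hu1 : u ≠ w1 := by
            intro e; exact hnd.1 (by simp [← e])
          have hu2 : u ≠ w2 := by
            intro e; exact hnd.1 (by simp [← e])
          have h12 : w1 ≠ w2 := by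
            intro e; exact hnd.2.1 (by simp [← e])
          have h1v : w1 ≠ v := by
            intro e; exact hnd.2.1 (by simp [e, hvq3])
          have h2v : w2 ≠ v := by
            intro e; exact hnd.2.2.1 (by simp [e, hvq3])
          set p : T.Path u v := ⟨Walk.cons h1 (Walk.cons h2 (Walk.cons h3 q3)), hq⟩ with hp
          have hm1 : w1 ∈ p.1.support := by simp [hp, support_cons]
          have hm2 : w2 ∈ p.1.support := by simp [hp, support_cons]
          obtain ⟨hA1, hB1⟩ := hdc u v huv p w1 hm1 (Ne.symm hu1) h1v
          obtain ⟨hA2, hB2⟩ := hdc u v huv p w2 hm2 (Ne.symm hu2) h2v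
          have hcard : ({u, v, w1, w2} : Finset V).card = 4 := by
            rw [Finset.card_insert_of_notMem (by simp [huv.ne, hu1, hu2]),
              Finset.card_insert_of_notMem (by simp [Ne.symm h1v, Ne.symm h2v]),
              Finset.card_pair h12]
          refine hK4 {u, v, w1, w2} ⟨?_, hcard⟩
          intro a ha b hb hab
          simp only [Finset.coe_insert, Set.mem_insert_iff, Finset.coe_singleton,
            Set.mem_singleton_iff] at ha hb
          have hG12 : G.Adj w1 w2 := hsub h2
          rcases ha with rfl | rfl | rfl | rfl <;> rcases hb with rfl | rfl | rfl | rfl <;>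
            first
            | exact absurd rfl hab
            | assumption
            | exact huv.symm
            | exact hA1.symm
            | exact hA2.symm
            | exact hB1.symm
            | exact hB2.symm
            | exact hG12.symm
  set cstar : V → Fin 3 := fun w => if w = r then χ w + 1 else χ (par w) with hcstar
  have A31 : ∀ a : Fin 3, a + 1 ≠ a := by decide
  have A34 : ∀ a b c d : Fin 3, ¬(a ≠ b ∧ c ≠ d ∧ a ≠ c ∧ a ≠ d ∧ b ≠ c ∧ b ≠ d) := by decide
  have A21 : ∀ a : ZMod 2, a + 1 ≠ a := by decide
  have cstar_ne : ∀ w, cstar w ≠ χ w := by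
    intro w
    by_cases hw : w = r
    · subst hw
      simp only [hcstar, if_pos rfl]
      exact A31 _
    · obtain ⟨h, -⟩ := stp w hw
      simp only [hcstar, if_neg hw]
      exact (χ.valid (hsub h))
  set hf : V → ZMod 2 := fun a =>
    if a = r then 0 else if par a ∈ s then 1
    else if χ a = cstar (par a) then 1 else 0 with hhf
  set col : V → ZMod 2 := fun v => ((pw v).support.map hf).sum with hcoldef
  have colstep : ∀ (u v : V) (h : T.Adj u v), pw v = (pw u).concat h →
      col v = col u + hf v := by
    intro u v h heq
    show ((pw v).support.map hf).sum = ((pw u).support.map hf).sum + hf v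
    rw [heq, support_concat]
    simp
  have main : ∀ u v : V, u ∈ s → v ∈ s → G.Adj u v → col u ≠ col v := by
    have tcase : ∀ (u v : V), u ∈ s → (h : T.Adj u v) → pw v = (pw u).concat h →
        col v ≠ col u := by
      intro u v hu h heq
      have hpv : par v = u := cdec u v h heq
      have hvr : v ≠ r := cne h (pw u) heq
      have hfv : hf v = 1 := by
        simp only [hhf, if_neg hvr, hpv, if_pos hu]
      rw [colstep u v h heq, hfv]
      exact A21 (col u)
    intro u v hu hv huv
    by_cases ht : T.Adj u v
    · rcases adjstep u v ht with hp | hp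
      · have hvr : v ≠ r := by
          intro e
          subst e
          rw [par_r] at hp
          exact ht.ne hp.symm
        obtain ⟨h', heq⟩ := stp v hvr
        have hu' : par v ∈ s := by rw [hp]; exact hu
        have hres := tcase (par v) v hu' h' heq
        rw [hp] at hres
        exact hres.symm
      · have hur : u ≠ r := by
          intro e
          subst e
          rw [par_r] at hp
          exact ht.ne hp
        obtain ⟨h', heq⟩ := stp u hur
        have hv' : par u ∈ s := by rw [hp]; exact hv
        have hres := tcase (par u) u hv' h' heq
        rw [hp] at hres
        exact hres
    · obtain ⟨w, h1, h2, hwu, hwv⟩ := dist2 u v huv ht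
      have hws : w ∉ s := fun hw => htf u v w hu hv hw huv (hsub h1) (hsub h2.symm)
      have hχuw : χ u ≠ χ w := χ.valid (hsub h1)
      have hχwv : χ w ≠ χ v := χ.valid (hsub h2)
      have hχuv : χ u ≠ χ v := χ.valid huv
      rcases adjstep u w h1 with hp1 | hp1 <;> rcases adjstep w v h2 with hp2 | hp2
      · -- par w = u, par v = w : u grandparent of v
        have hwr : w ≠ r := by
          intro e
          subst e
          rw [par_r] at hp1
          exact hwu hp1
        have hvr : v ≠ r := by
          intro e
          subst e
          rw [par_r] at hp2
          exact hwv hp2.symm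
        obtain ⟨hA, heqw⟩ := stp w hwr
        obtain ⟨hB, heqv⟩ := stp v hvr
        have e1 := colstep _ _ hA heqw
        have e2 := colstep _ _ hB heqv
        rw [hp1] at e1
        rw [hp2] at e2
        have hfw : hf w = 1 := by
          show (if w = r then 0 else if par w ∈ s then 1
            else if χ w = cstar (par w) then 1 else 0) = 1
          rw [if_neg hwr, hp1, if_pos hu]
        have hcs : cstar w = χ u := by
          show (if w = r then χ w + 1 else χ (par w)) = χ u
          rw [if_neg hwr, hp1]
        have hfv : hf v = 0 := by
          show (if v = r then 0 else if par v ∈ s then 1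
            else if χ v = cstar (par v) then 1 else 0) = 0
          rw [if_neg hvr, hp2, if_neg hws, hcs, if_neg (fun e => hχuv e.symm)]
        intro e
        rw [e2, e1, hfw, hfv, add_zero] at e
        exact A21 (col u) e.symm
      · -- par w = u, par w = v : impossible
        exact absurd (hp1.symm.trans hp2) huv.ne
      · -- par u = w, par v = w : siblings
        have hur : u ≠ r := by
          intro e
          subst e
          rw [par_r] at hp1
          exact hwu hp1.symm
        have hvr : v ≠ r := by
          intro e
          subst e
          rw [par_r] at hp2
          exact hwv hp2.symm
        obtain ⟨hB, hequ⟩ := stp u hur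
        obtain ⟨hC, heqv⟩ := stp v hvr
        have e1 := colstep _ _ hB hequ
        have e2 := colstep _ _ hC heqv
        rw [hp1] at e1
        rw [hp2] at e2
        have hcw := cstar_ne w
        have hfu : hf u = (if χ u = cstar w then 1 else 0) := by
          show (if u = r then 0 else if par u ∈ s then 1
            else if χ u = cstar (par u) then 1 else 0) = _
          rw [if_neg hur, hp1, if_neg hws]
        have hfv : hf v = (if χ v = cstar w then 1 else 0) := by
          show (if v = r then 0 else if par v ∈ s then 1
            else if χ v = cstar (par v) then 1 else 0) = _
          rw [if_neg hvr, hp2, if_neg hws]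
        have hfune : hf u ≠ hf v := by
          rw [hfu, hfv]
          by_cases b1 : χ u = cstar w <;> by_cases b2 : χ v = cstar w
          · exact absurd (b1.trans b2.symm) hχuv
          · simp [b1, b2]
          · simp [b1, b2]
          · exact absurd ⟨hχuv, hcw.symm, hχuw, b1, fun e => hχwv e.symm, b2⟩
              (A34 (χ u) (χ v) (χ w) (cstar w))
        intro e
        rw [e1, e2] at e
        exact hfune (add_left_cancel e)
      · -- par u = w, par w = v : v grandparent of u
        have hwr : w ≠ r := by
          intro e
          subst e
          rw [par_r] at hp2
          exact hwv hp2
        have hur : u ≠ r := by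
          intro e
          subst e
          rw [par_r] at hp1
          exact hwu hp1.symm
        obtain ⟨hA, heqw⟩ := stp w hwr
        obtain ⟨hB, hequ⟩ := stp u hur
        have e1 := colstep _ _ hA heqw
        have e2 := colstep _ _ hB hequ
        rw [hp2] at e1
        rw [hp1] at e2
        have hfw : hf w = 1 := by
          show (if w = r then 0 else if par w ∈ s then 1
            else if χ w = cstar (par w) then 1 else 0) = 1
          rw [if_neg hwr, hp2, if_pos hv]
        have hcs : cstar w = χ v := by
          show (if w = r then χ w + 1 else χ (par w)) = χ v
          rw [if_neg hwr, hp2]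
        have hfu : hf u = 0 := by
          show (if u = r then 0 else if par u ∈ s then 1
            else if χ u = cstar (par u) then 1 else 0) = 0
          rw [if_neg hur, hp1, if_neg hws, hcs, if_neg hχuv]
        intro e
        rw [e2, e1, hfw, hfu, add_zero] at e
        exact A21 (col v) e
  have C : (G.induce s).Coloring (ZMod 2) :=
    Coloring.mk (fun v => col v.1) (fun {a b} hab => main a.1 b.1 a.2 b.2 hab)
  have h2 := C.colorable
  rwa [ZMod.card 2] at h2

end StmtAux

theorem stmt_10 {V : Type*} [Fintype V] (G T : SimpleGraph V)
    (hGconn : G.Connected) (hsub : T ≤ G) (htree : T.IsTree)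
    (hpath : ∀ u v : V, G.Adj u v → ∀ p : T.Path u v, ∀ w ∈ p.1.support,
      w ≠ u → w ≠ v → G.Adj u w ∧ G.Adj v w) :
    G.Colorable 3 ↔ (IsPerfect G ∧ G.CliqueFree 4) := by
  classical
  constructor
  · intro hcol
    have hK4 : G.CliqueFree 4 := hcol.cliqueFree (by norm_num)
    refine ⟨?_, hK4⟩
    intro s
    haveI : Fintype ↥s := Fintype.ofFinite ↥s
    have hge : (((G.induce s).cliqueNum : ℕ∞)) ≤ (G.induce s).chromaticNumber := by
      obtain ⟨t, ht⟩ := (G.induce s).exists_isNClique_cliqueNum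
      rw [← ht.2]
      exact ht.1.card_le_chromaticNumber
    have hKH : (G.induce s).CliqueFree 4 := hK4.comap (SimpleGraph.Embedding.induce s).isContained
    have hw3 : (G.induce s).cliqueNum ≤ 3 := StmtAux.cliqueNum_le_of_cliqueFree hKH
    have hcases : (G.induce s).Colorable ((G.induce s).cliqueNum) := by
      set n := (G.induce s).cliqueNum with hn
      interval_cases n
      · -- cliqueNum = 0 : no vertices
        haveI : IsEmpty ↥s := by
          constructor
          intro v
          have h1 : (G.induce s).IsClique ({v} : Finset ↥s) := by simp
          have := h1.card_le_cliqueNum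
          rw [← hn] at this
          simp at this
        exact Colorable.of_isEmpty 0
      · -- cliqueNum = 1 : no edges
        refine ⟨Coloring.mk (fun _ => (0 : Fin 1)) ?_⟩
        intro a b hab hc
        have h1 : (G.induce s).IsClique ({a, b} : Finset ↥s) := by
          simp [SimpleGraph.isClique_pair]
          intro _; exact hab
        have := h1.card_le_cliqueNum
        rw [← hn, Finset.card_pair hab.ne] at this
        omega
      · -- cliqueNum = 2 : triangle-free, use the key lemma
        apply StmtAux.two_colorable G T hsub htree hK4 hpath hcol.some
        intro a b c ha hb hc hab hac hbc
        have h1 : (G.induce s).IsClique ({⟨a, ha⟩, ⟨b, hb⟩, ⟨c, hc⟩} : Finset ↥s) := by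
          intro x hx y hy hxy
          simp only [Finset.coe_insert, Set.mem_insert_iff, Finset.coe_singleton,
            Set.mem_singleton_iff] at hx hy
          rcases hx with rfl | rfl | rfl <;> rcases hy with rfl | rfl | rfl <;>
            first
            | exact absurd rfl hxy
            | exact hab | exact hab.symm | exact hac | exact hac.symm
            | exact hbc | exact hbc.symm
        have := h1.card_le_cliqueNum
        rw [← hn] at this
        have hcard : ({⟨a, ha⟩, ⟨b, hb⟩, ⟨c, hc⟩} : Finset ↥s).card = 3 := by
          rw [Finset.card_insert_of_notMem, Finset.card_insert_of_notMem,
            Finset.card_singleton]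
          · simp [Subtype.ext_iff]
            exact hbc.ne
          · simp [Subtype.ext_iff]
            exact ⟨hab.ne, hac.ne⟩
        omega
      · -- cliqueNum = 3 : use 3-colorability of G
        obtain ⟨C⟩ := hcol
        exact ⟨Coloring.mk (fun v => C v.1) (fun {a b} hab => C.valid hab)⟩
    exact le_antisymm (chromaticNumber_le_iff_colorable.2 hcases) hge
  · rintro ⟨hperf, hK4⟩
    have h1 := hperf Set.univ
    haveI : Fintype ↥(Set.univ : Set V) := Fintype.ofFinite _
    have hKu : (G.induce Set.univ).CliqueFree 4 :=
      hK4.comap (SimpleGraph.Embedding.induce _).isContained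
    have hw : (G.induce Set.univ).cliqueNum ≤ 3 := StmtAux.cliqueNum_le_of_cliqueFree hKu
    have hle : (G.induce Set.univ).chromaticNumber ≤ (3 : ℕ) := by
      rw [h1]
      exact_mod_cast hw
    have hcu : (G.induce Set.univ).Colorable 3 := chromaticNumber_le_iff_colorable.1 hle
    obtain ⟨C⟩ := hcu
    exact ⟨Coloring.mk (fun v => C ⟨v, trivial⟩) (fun {a b} hab => C.valid hab)⟩
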